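/- Let G be a graph with perfect matching M and let F ⊆ M be a forcing set of M. Then the set F' of all edges of G not in M that are incident with an endpoint of some edge of F is an anti-forcing set of M, and |F'| ≤ (Δ−1)|F| where Δ is the maximum degree of G. -/

import Mathlib

open SimpleGraph

variable {V : Type*}

/-- A closed walk is an `M`-alternating cycle: it is a cycle and its edges alternate
(cyclically) between `M` and the complement of `M`. -/
def SimpleGraph.IsAltCycle (G : SimpleGraph V) (M : Set (Sym2 V)) {v : V} (c : G.Walk v v) :
    Prop :=
  c.IsCycle ∧ List.Chain' (fun e f => (e ∈ M ↔ f ∉ M)) c.edges ∧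
    ∀ e f, c.edges.head? = some e → c.edges.getLast? = some f → (f ∈ M ↔ e ∉ M)

/-- `S` is a forcing set of the perfect matching `M`: `S ⊆ M` and `M` is the unique
perfect matching of `G` containing `S`. -/
def SimpleGraph.IsForcingSet (G : SimpleGraph V) (M : G.Subgraph) (S : Set (Sym2 V)) : Prop :=
  S ⊆ M.edgeSet ∧ ∀ N : G.Subgraph, N.IsPerfectMatching → S ⊆ N.edgeSet → N = M

/-- `S` is an anti-forcing set of the perfect matching `M`: `S` consists of edges of `G`
not in `M`, and `M` is the unique perfect matching of `G - S` (equivalently, the unique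
perfect matching of `G` whose edge set avoids `S`). -/
def SimpleGraph.IsAntiForcingSet (G : SimpleGraph V) (M : G.Subgraph) (S : Set (Sym2 V)) :
    Prop :=
  S ⊆ G.edgeSet \ M.edgeSet ∧
    ∀ N : G.Subgraph, N.IsPerfectMatching → Disjoint N.edgeSet S → N = M

/-- The forcing number `f(G,M)`. -/
noncomputable def SimpleGraph.forcingNum (G : SimpleGraph V) (M : G.Subgraph) : ℕ :=
  sInf {n | ∃ S : Set (Sym2 V), G.IsForcingSet M S ∧ S.ncard = n}

/-- The anti-forcing number `af(G,M)`. -/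
noncomputable def SimpleGraph.antiForcingNum (G : SimpleGraph V) (M : G.Subgraph) : ℕ :=
  sInf {n | ∃ S : Set (Sym2 V), G.IsAntiForcingSet M S ∧ S.ncard = n}

lemma aux_ncard_biUnion_le {α β : Type*} [Finite β] {s : Set α} (hs : s.Finite) {t : α → Set β}
    {n : ℕ} (hn : ∀ a ∈ s, (t a).ncard ≤ n) :
    (⋃ a ∈ s, t a).ncard ≤ n * s.ncard := by
  refine Set.Finite.induction_on (motive := fun s _ => (∀ a ∈ s, (t a).ncard ≤ n) →
    (⋃ a ∈ s, t a).ncard ≤ n * s.ncard) s hs (by simp) ?_ hn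
  intro a s ha hs ih hn'
  rw [Set.biUnion_insert]
  calc (t a ∪ ⋃ x ∈ s, t x).ncard ≤ (t a).ncard + (⋃ x ∈ s, t x).ncard :=
        Set.ncard_union_le _ _
    _ ≤ n + n * s.ncard := Nat.add_le_add (hn' a (Set.mem_insert _ _))
        (ih fun x hx => hn' x (Set.mem_insert_of_mem _ hx))
    _ = n * (insert a s).ncard := by
        rw [Set.ncard_insert_of_notMem ha hs, Nat.mul_add, Nat.mul_one, Nat.add_comm]

/-- If `F ⊆ M` is a forcing set of `M` and, for each edge of `F`, one of its endpoints is
chosen (via `h`), then the set `F'` of all edges of `G` not in `M` incident with a chosen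
endpoint of some edge of `F` is an anti-forcing set of `M`, and `|F'| ≤ (Δ−1)·|F|`. -/
theorem neighborhood_of_forcing_is_antiforcing (G : SimpleGraph V) [Fintype V]
    [DecidableRel G.Adj] (M : G.Subgraph) (hM : M.IsPerfectMatching)
    (F : Set (Sym2 V)) (hF : G.IsForcingSet M F)
    (h : Sym2 V → V) (hh : ∀ e ∈ F, h e ∈ e) :
    G.IsAntiForcingSet M
        {e' | e' ∈ G.edgeSet ∧ e' ∉ M.edgeSet ∧ ∃ f ∈ F, h f ∈ e'} ∧
      {e' | e' ∈ G.edgeSet ∧ e' ∉ M.edgeSet ∧ ∃ f ∈ F, h f ∈ e'}.ncard ≤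
        (G.maxDegree - 1) * F.ncard := by
  classical
  constructor
  · constructor
    · rintro e ⟨he, heM, -⟩
      exact ⟨he, heM⟩
    · intro N hN hdisj
      refine hF.2 N hN ?_
      intro f hf
      set v := h f with hv
      have hfM : f ∈ M.edgeSet := hF.1 hf
      have hvf : v ∈ f := hh f hf
      obtain ⟨u, hfu⟩ := Sym2.mem_iff_exists.mp hvf
      have hMvu : M.Adj v u := by rw [← SimpleGraph.Subgraph.mem_edgeSet, ← hfu]; exact hfM
      obtain ⟨w, hw, -⟩ := hN.1 (hN.2 v)
      have hwE : s(v, w) ∈ N.edgeSet := hw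
      have hwG : s(v, w) ∈ G.edgeSet := N.adj_sub hw
      have hnot : s(v, w) ∉ {e' | e' ∈ G.edgeSet ∧ e' ∉ M.edgeSet ∧ ∃ f ∈ F, h f ∈ e'} :=
        Set.disjoint_left.mp hdisj hwE
      have hwM : s(v, w) ∈ M.edgeSet := by
        by_contra hc
        exact hnot ⟨hwG, hc, f, hf, hv ▸ Sym2.mem_mk_left v w⟩
      have hMvw : M.Adj v w := hwM
      obtain ⟨x, -, hx⟩ := hM.1 (hM.2 v)
      have huw : u = w := by rw [hx u hMvu, hx w hMvw]
      rw [hfu, huw]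
      exact hwE
  · have hFfin : F.Finite := Set.toFinite F
    have hsub : {e' | e' ∈ G.edgeSet ∧ e' ∉ M.edgeSet ∧ ∃ f ∈ F, h f ∈ e'} ⊆
        ⋃ f ∈ F, (G.incidenceSet (h f) \ {f}) := by
      rintro e ⟨he, heM, f, hf, hfe⟩
      refine Set.mem_biUnion hf ⟨⟨he, hfe⟩, ?_⟩
      simp only [Set.mem_singleton_iff]
      rintro rfl
      exact heM (hF.1 hf)
    refine le_trans (Set.ncard_le_ncard hsub (Set.toFinite _)) ?_
    refine aux_ncard_biUnion_le hFfin ?_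
    intro f hf
    have hfinc : f ∈ G.incidenceSet (h f) :=
      ⟨M.edgeSet_subset (hF.1 hf), hh f hf⟩
    have h1 : (G.incidenceSet (h f) \ {f}).ncard = (G.incidenceSet (h f)).ncard - 1 :=
      Set.ncard_diff_singleton_of_mem hfinc
    have h2 : (G.incidenceSet (h f)).ncard = G.degree (h f) := by
      rw [Set.ncard_eq_toFinset_card', Set.toFinset_card, card_incidenceSet_eq_degree]
    rw [h1, h2]
    exact Nat.sub_le_sub_right (G.degree_le_maxDegree _) 1
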